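/- Let M be a monoidal category, let i : M₀ ⥤ M be the inclusion of a full reflective subcategory with reflector a : M ⥤ M₀ (left adjoint to i). Assume that for every morphism f of M such that a.map f is an isomorphism and every object m of M, both a.map (f ▷) := a.map (f ⊗ 𝟙 m) and a.map (𝟙 m ⊗ f) are isomorphisms. Then M₀ admits a monoidal category structure with tensor product X ⊗₀ Y = a.obj (i.obj X ⊗ i.obj Y) and unit a.obj (𝟙_M), and the reflector a admits the structure of a strong monoidal functor from M to M₀. -/

import Mathlib

open CategoryTheory MonoidalCategory

universe v v' u u'

set_option linter.unusedSectionVars false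
set_option linter.unusedVariables false

namespace DayRefl

variable {M : Type u} [Category.{v} M] [MonoidalCategory M]
  {M₀ : Type u'} [Category.{v'} M₀] (i : M₀ ⥤ M) [i.Full] [i.Faithful]
  (a : M ⥤ M₀) (adj : a ⊣ i)

/-- The basic "roof" relation: `ψ : P ⟶ Q` in `M₀` is represented by `s : T₁ ⟶ T₂` in `M`
via comparison maps `u₁, u₂`. -/
def Rel {P Q : M₀} {T₁ T₂ : M} (ψ : P ⟶ Q) (s : T₁ ⟶ T₂)
    (u₁ : T₁ ⟶ i.obj P) (u₂ : T₂ ⟶ i.obj Q) : Prop :=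
  u₁ ≫ i.map ψ = s ≫ u₂

variable {i a}

section RelLemmas

variable {P Q R : M₀} {T₁ T₂ T₃ : M}

lemma rel_self (ψ : P ⟶ Q) : Rel i ψ (i.map ψ) (𝟙 _) (𝟙 _) := by simp [Rel]

lemma rel_id (u : T₁ ⟶ i.obj P) : Rel i (𝟙 P) (𝟙 T₁) u u := by simp [Rel]

lemma Rel.comp {ψ : P ⟶ Q} {ψ' : Q ⟶ R} {s : T₁ ⟶ T₂} {s' : T₂ ⟶ T₃}
    {u₁ : T₁ ⟶ i.obj P} {u₂ u₂' : T₂ ⟶ i.obj Q} {u₃ : T₃ ⟶ i.obj R}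
    (hr : Rel i ψ s u₁ u₂) (hr' : Rel i ψ' s' u₂' u₃) (e : u₂ = u₂') :
    Rel i (ψ ≫ ψ') (s ≫ s') u₁ u₃ := by
  subst e
  simp only [Rel, Functor.map_comp] at *
  rw [← Category.assoc, hr, Category.assoc, hr', Category.assoc]

lemma Rel.shift {ψ : P ⟶ Q} {s : T₁ ⟶ T₂} {u₁ : T₁ ⟶ i.obj P} {u₂ : T₂ ⟶ i.obj Q}
    (hr : Rel i ψ s u₁ u₂) {T₁' T₂' : M} {v₁ : T₁' ⟶ T₁} {v₂ : T₂' ⟶ T₂} {s' : T₁' ⟶ T₂'}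
    (sq : v₁ ≫ s = s' ≫ v₂) :
    Rel i ψ s' (v₁ ≫ u₁) (v₂ ≫ u₂) := by
  simp only [Rel] at *
  rw [Category.assoc, hr, ← Category.assoc, sq, Category.assoc]

lemma rel_inv {ψ : P ⟶ Q} {s : T₁ ⟶ T₂} {u₁ : T₁ ⟶ i.obj P} {u₂ : T₂ ⟶ i.obj Q}
    (hr : Rel i ψ s u₁ u₂) [IsIso ψ] [IsIso s] :
    Rel i (inv ψ) (inv s) u₂ u₁ := by
  simp only [Rel] at *
  rw [Functor.map_inv, IsIso.comp_inv_eq, Category.assoc, hr, IsIso.inv_hom_id_assoc]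

include adj

lemma rel_map {D₁ D₂ : M} (f : D₁ ⟶ D₂) {u₁ : T₁ ⟶ D₁} {u₂ : T₂ ⟶ D₂} {s : T₁ ⟶ T₂}
    (sq : u₁ ≫ f = s ≫ u₂) :
    Rel i (a.map f) s (u₁ ≫ adj.unit.app D₁) (u₂ ≫ adj.unit.app D₂) := by
  have n := adj.unit.naturality f
  simp only [Functor.id_map, Functor.comp_map] at n
  simp only [Rel, Category.assoc]
  rw [← n, ← Category.assoc, ← Category.assoc, sq]

lemma rel_map' {D₁ D₂ : M} (f : D₁ ⟶ D₂) :
    Rel i (a.map f) f (adj.unit.app D₁) (adj.unit.app D₂) := by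
  simpa using rel_map (a := a) adj f (u₁ := 𝟙 D₁) (u₂ := 𝟙 D₂) (s := f) (by simp)

lemma rel_counit (X : M₀) :
    Rel i (adj.counit.app X) (𝟙 (i.obj X)) (adj.unit.app (i.obj X)) (𝟙 _) := by
  simp [Rel]

lemma rel_tensor {ψ : P ⟶ Q} {ψ' : P ⟶ Q}: True := trivial

/-- `Rel` for tensor products of morphisms. -/
lemma rel_tensorHom {P' Q' : M₀} {T₁' T₂' : M} {ψ : P ⟶ Q} {ψ' : P' ⟶ Q'}
    {s : T₁ ⟶ T₂} {s' : T₁' ⟶ T₂'}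
    {u₁ : T₁ ⟶ i.obj P} {u₂ : T₂ ⟶ i.obj Q} {v₁ : T₁' ⟶ i.obj P'} {v₂ : T₂' ⟶ i.obj Q'}
    (hr : Rel i ψ s u₁ u₂) (hr' : Rel i ψ' s' v₁ v₂) :
    Rel i (a.map (i.map ψ ⊗ₘ i.map ψ')) (s ⊗ₘ s')
      ((u₁ ⊗ₘ v₁) ≫ adj.unit.app _) ((u₂ ⊗ₘ v₂) ≫ adj.unit.app _) := by
  refine rel_map adj _ ?_
  rw [tensorHom_comp_tensorHom, tensorHom_comp_tensorHom, hr, hr']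

lemma rel_whiskerRight {ψ : P ⟶ Q} {s : T₁ ⟶ T₂}
    {u₁ : T₁ ⟶ i.obj P} {u₂ : T₂ ⟶ i.obj Q} (hr : Rel i ψ s u₁ u₂) (W : M₀) :
    Rel i (a.map (i.map ψ ▷ i.obj W)) (s ▷ i.obj W)
      ((u₁ ▷ i.obj W) ≫ adj.unit.app _) ((u₂ ▷ i.obj W) ≫ adj.unit.app _) := by
  refine rel_map adj _ ?_
  rw [← comp_whiskerRight, ← comp_whiskerRight, hr]

lemma rel_whiskerLeft {ψ : P ⟶ Q} {s : T₁ ⟶ T₂}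
    {u₁ : T₁ ⟶ i.obj P} {u₂ : T₂ ⟶ i.obj Q} (hr : Rel i ψ s u₁ u₂) (W : M₀) :
    Rel i (a.map (i.obj W ◁ i.map ψ)) (i.obj W ◁ s)
      ((i.obj W ◁ u₁) ≫ adj.unit.app _) ((i.obj W ◁ u₂) ≫ adj.unit.app _) := by
  refine rel_map adj _ ?_
  rw [← MonoidalCategory.whiskerLeft_comp, ← MonoidalCategory.whiskerLeft_comp, hr]

/-- Extract the `M₀`-level equation from a `Rel`. -/
lemma Rel.map_eq {ψ : P ⟶ Q} {s : T₁ ⟶ T₂} {u₁ : T₁ ⟶ i.obj P} {u₂ : T₂ ⟶ i.obj Q}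
    (hr : Rel i ψ s u₁ u₂) :
    a.map u₁ ≫ adj.counit.app P ≫ ψ = a.map s ≫ a.map u₂ ≫ adj.counit.app Q := by
  have := adj.counit.naturality ψ
  simp only [Functor.comp_map, Functor.id_map] at this
  rw [← this, ← Category.assoc, ← a.map_comp, hr]
  simp

/-- Two morphisms with a common representing roof agree, provided `a` inverts `u₁`. -/
lemma eq_of_rel {ψ ψ' : P ⟶ Q} {s s' : T₁ ⟶ T₂} {u₁ : T₁ ⟶ i.obj P} {u₂ : T₂ ⟶ i.obj Q}
    (hr : Rel i ψ s u₁ u₂) (hr' : Rel i ψ' s' u₁ u₂) (es : s = s')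
    (hu : IsIso (a.map u₁)) : ψ = ψ' := by
  subst es
  have e := (hr.map_eq (a := a) adj).trans (hr'.map_eq (a := a) adj).symm
  haveI := hu
  rwa [cancel_epi (a.map u₁), cancel_epi (adj.counit.app P)] at e

/-- Converse extraction: obtain a `Rel` from an `M₀`-level equation. -/
lemma rel_of_map_eq {ψ : P ⟶ Q} {s : T₁ ⟶ T₂} {u₁ : T₁ ⟶ i.obj P} {u₂ : T₂ ⟶ i.obj Q}
    (hψ : a.map u₁ ≫ adj.counit.app P ≫ ψ = a.map s ≫ a.map u₂ ≫ adj.counit.app Q) :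
    Rel i ψ s u₁ u₂ := by
  have h1 : adj.homEquiv _ _ (a.map u₁ ≫ adj.counit.app P ≫ ψ) = u₁ ≫ i.map ψ := by
    rw [Adjunction.homEquiv_unit]
    simp only [Functor.map_comp]
    rw [← Category.assoc (adj.unit.app T₁), adj.unit_naturality u₁]
    simp
  have h2 : adj.homEquiv T₁ Q (a.map s ≫ a.map u₂ ≫ adj.counit.app Q) = s ≫ u₂ := by
    rw [Adjunction.homEquiv_unit]
    simp only [Functor.map_comp]
    rw [← Category.assoc (adj.unit.app T₁), adj.unit_naturality s]
    simp only [Category.assoc]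
    rw [← Category.assoc (adj.unit.app T₂), adj.unit_naturality u₂]
    simp
  have := congrArg (adj.homEquiv T₁ Q) hψ
  rw [h1, h2] at this
  exact this

end RelLemmas

section IsoLemmas

include adj

lemma wUnit (P : M) : IsIso (a.map (adj.unit.app P)) := by
  have t := adj.left_triangle_components P
  have : a.map (adj.unit.app P) = inv (adj.counit.app (a.obj P)) := by
    rw [← cancel_mono (adj.counit.app (a.obj P))]
    simp [t]
  rw [this]; infer_instance

variable (h : ∀ {X Y : M} (f : X ⟶ Y), IsIso (a.map f) →
      ∀ m : M, IsIso (a.map (f ▷ m)) ∧ IsIso (a.map (m ◁ f)))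

include h

lemma wR {X Y : M} {f : X ⟶ Y} (hf : IsIso (a.map f)) (m : M) : IsIso (a.map (f ▷ m)) :=
  (h f hf m).1

lemma wL {X Y : M} {f : X ⟶ Y} (hf : IsIso (a.map f)) (m : M) : IsIso (a.map (m ◁ f)) :=
  (h f hf m).2

omit h in
lemma wComp {X Y Z : M} {f : X ⟶ Y} {g : Y ⟶ Z} (hf : IsIso (a.map f)) (hg : IsIso (a.map g)) :
    IsIso (a.map (f ≫ g)) := by
  rw [a.map_comp]; exact @IsIso.comp_isIso _ _ _ _ _ _ _ hf hg

lemma wTensor {X Y X' Y' : M} {f : X ⟶ Y} {g : X' ⟶ Y'}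
    (hf : IsIso (a.map f)) (hg : IsIso (a.map g)) : IsIso (a.map (f ⊗ₘ g)) := by
  rw [MonoidalCategory.tensorHom_def]
  exact wComp adj (wR adj h hf _) (wL adj h hg _)

end IsoLemmas


section StructureDefs

variable (i a)
variable (h : ∀ {X Y : M} (f : X ⟶ Y), IsIso (a.map f) →
      ∀ m : M, IsIso (a.map (f ▷ m)) ∧ IsIso (a.map (m ◁ f)))

/-- The associator for the transferred monoidal structure. -/
noncomputable def assoc (X Y Z : M₀) :
    a.obj (i.obj (a.obj (i.obj X ⊗ i.obj Y)) ⊗ i.obj Z) ≅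
      a.obj (i.obj X ⊗ i.obj (a.obj (i.obj Y ⊗ i.obj Z))) :=
  haveI := wR adj h (wUnit adj (i.obj X ⊗ i.obj Y)) (i.obj Z)
  haveI := wL adj h (wUnit adj (i.obj Y ⊗ i.obj Z)) (i.obj X)
  (asIso (a.map (adj.unit.app (i.obj X ⊗ i.obj Y) ▷ i.obj Z))).symm ≪≫
    a.mapIso (α_ (i.obj X) (i.obj Y) (i.obj Z)) ≪≫
    asIso (a.map (i.obj X ◁ adj.unit.app (i.obj Y ⊗ i.obj Z)))

/-- The left unitor for the transferred monoidal structure. -/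
noncomputable def lUn (X : M₀) : a.obj (i.obj (a.obj (𝟙_ M)) ⊗ i.obj X) ≅ X :=
  haveI := wR adj h (wUnit adj (𝟙_ M)) (i.obj X)
  (asIso (a.map (adj.unit.app (𝟙_ M) ▷ i.obj X))).symm ≪≫
    a.mapIso (λ_ (i.obj X)) ≪≫ asIso (adj.counit.app X)

/-- The right unitor for the transferred monoidal structure. -/
noncomputable def rUn (X : M₀) : a.obj (i.obj X ⊗ i.obj (a.obj (𝟙_ M))) ≅ X :=
  haveI := wL adj h (wUnit adj (𝟙_ M)) (i.obj X)
  (asIso (a.map (i.obj X ◁ adj.unit.app (𝟙_ M)))).symm ≪≫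
    a.mapIso (ρ_ (i.obj X)) ≪≫ asIso (adj.counit.app X)

/-- The tensorator of the reflector. -/
noncomputable def mu (X Y : M) :
    a.obj (i.obj (a.obj X) ⊗ i.obj (a.obj Y)) ≅ a.obj (X ⊗ Y) :=
  haveI := wTensor adj h (wUnit adj X) (wUnit adj Y)
  (asIso (a.map (adj.unit.app X ⊗ₘ adj.unit.app Y))).symm

variable {i a}

lemma rel_assoc (X Y Z : M₀) :
    Rel i (assoc i a adj h X Y Z).hom (α_ (i.obj X) (i.obj Y) (i.obj Z)).hom
      ((adj.unit.app (i.obj X ⊗ i.obj Y) ▷ i.obj Z) ≫ adj.unit.app _)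
      ((i.obj X ◁ adj.unit.app (i.obj Y ⊗ i.obj Z)) ≫ adj.unit.app _) := by
  haveI := wR adj h (wUnit adj (i.obj X ⊗ i.obj Y)) (i.obj Z)
  haveI := wL adj h (wUnit adj (i.obj Y ⊗ i.obj Z)) (i.obj X)
  refine rel_of_map_eq adj ?_
  simp [assoc]

lemma rel_lUn (X : M₀) :
    Rel i (lUn i a adj h X).hom (λ_ (i.obj X)).hom
      ((adj.unit.app (𝟙_ M) ▷ i.obj X) ≫ adj.unit.app _) (𝟙 (i.obj X)) := by
  haveI := wR adj h (wUnit adj (𝟙_ M)) (i.obj X)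
  refine rel_of_map_eq adj ?_
  simp [lUn]

lemma rel_rUn (X : M₀) :
    Rel i (rUn i a adj h X).hom (ρ_ (i.obj X)).hom
      ((i.obj X ◁ adj.unit.app (𝟙_ M)) ≫ adj.unit.app _) (𝟙 (i.obj X)) := by
  haveI := wL adj h (wUnit adj (𝟙_ M)) (i.obj X)
  refine rel_of_map_eq adj ?_
  simp [rUn]

lemma rel_mu (X Y : M) :
    Rel i (mu i a adj h X Y).hom (𝟙 (X ⊗ Y))
      (((adj.unit.app X ⊗ₘ adj.unit.app Y) ≫ adj.unit.app _)) (adj.unit.app (X ⊗ Y)) := by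
  haveI := wTensor adj h (wUnit adj X) (wUnit adj Y)
  refine rel_of_map_eq adj ?_
  simp [mu]

end StructureDefs


section Coherence

variable (i a)
variable (h : ∀ {X Y : M} (f : X ⟶ Y), IsIso (a.map f) →
      ∀ m : M, IsIso (a.map (f ▷ m)) ∧ IsIso (a.map (m ◁ f)))

variable {i a}

lemma Rel.congr {P Q : M₀} {T₁ T₂ : M} {ψ : P ⟶ Q} {s : T₁ ⟶ T₂}
    {u₁ u₁' : T₁ ⟶ i.obj P} {u₂ u₂' : T₂ ⟶ i.obj Q}
    (hr : Rel i ψ s u₁ u₂) (e₁ : u₁ = u₁') (e₂ : u₂ = u₂') : Rel i ψ s u₁' u₂' := by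
  subst e₁; subst e₂; exact hr


lemma tensorHom_def₀ {X₁ Y₁ X₂ Y₂ : M₀} (f : X₁ ⟶ Y₁) (g : X₂ ⟶ Y₂) :
    a.map (i.map f ⊗ₘ i.map g) =
      a.map (i.map f ▷ i.obj X₂) ≫ a.map (i.obj Y₁ ◁ i.map g) := by
  rw [← a.map_comp, ← MonoidalCategory.tensorHom_def]

lemma tensor_id₀ (X Y : M₀) :
    a.map (i.map (𝟙 X) ⊗ₘ i.map (𝟙 Y)) = 𝟙 (a.obj (i.obj X ⊗ i.obj Y)) := by simp

lemma tensor_comp₀ {X₁ Y₁ Z₁ X₂ Y₂ Z₂ : M₀} (f₁ : X₁ ⟶ Y₁) (f₂ : X₂ ⟶ Y₂)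
    (g₁ : Y₁ ⟶ Z₁) (g₂ : Y₂ ⟶ Z₂) :
    a.map (i.map (f₁ ≫ g₁) ⊗ₘ i.map (f₂ ≫ g₂)) =
      a.map (i.map f₁ ⊗ₘ i.map f₂) ≫ a.map (i.map g₁ ⊗ₘ i.map g₂) := by
  rw [← a.map_comp, i.map_comp, i.map_comp, tensorHom_comp_tensorHom]

lemma whiskerLeft_id₀ (X Y : M₀) :
    a.map (i.obj X ◁ i.map (𝟙 Y)) = 𝟙 (a.obj (i.obj X ⊗ i.obj Y)) := by simp

lemma id_whiskerRight₀ (X Y : M₀) :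
    a.map (i.map (𝟙 X) ▷ i.obj Y) = 𝟙 (a.obj (i.obj X ⊗ i.obj Y)) := by simp

lemma assoc_naturality {X₁ X₂ X₃ Y₁ Y₂ Y₃ : M₀} (f₁ : X₁ ⟶ Y₁) (f₂ : X₂ ⟶ Y₂) (f₃ : X₃ ⟶ Y₃) :
    a.map (i.map (a.map (i.map f₁ ⊗ₘ i.map f₂)) ⊗ₘ i.map f₃) ≫ (assoc i a adj h Y₁ Y₂ Y₃).hom =
      (assoc i a adj h X₁ X₂ X₃).hom ≫
        a.map (i.map f₁ ⊗ₘ i.map (a.map (i.map f₂ ⊗ₘ i.map f₃))) := by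
  refine eq_of_rel adj
    (s := ((i.map f₁ ⊗ₘ i.map f₂) ⊗ₘ i.map f₃) ≫ (α_ (i.obj Y₁) (i.obj Y₂) (i.obj Y₃)).hom)
    (s' := (α_ (i.obj X₁) (i.obj X₂) (i.obj X₃)).hom ≫ (i.map f₁ ⊗ₘ (i.map f₂ ⊗ₘ i.map f₃)))
    (u₁ := (adj.unit.app (i.obj X₁ ⊗ i.obj X₂) ▷ i.obj X₃) ≫ adj.unit.app _)
    (u₂ := (i.obj Y₁ ◁ adj.unit.app (i.obj Y₂ ⊗ i.obj Y₃)) ≫ adj.unit.app _)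
    ?_ ?_ ?_ (wComp adj (wR adj h (wUnit adj _) _) (wUnit adj _))
  · refine Rel.congr ((rel_tensorHom adj (rel_map' adj _) (rel_self f₃)).comp
      (rel_assoc adj h Y₁ Y₂ Y₃) ?_) ?_ ?_
    · simp
    · simp [MonoidalCategory.tensorHom_def, whisker_exchange]
    · rfl
  · refine Rel.congr ((rel_assoc adj h X₁ X₂ X₃).comp
      (rel_tensorHom adj (rel_self f₁) (rel_map' adj _)) ?_) ?_ ?_
    · simp
    · rfl
    · simp [MonoidalCategory.tensorHom_def, ← whisker_exchange]
  · exact associator_naturality (i.map f₁) (i.map f₂) (i.map f₃)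

lemma lUn_naturality {X Y : M₀} (f : X ⟶ Y) :
    a.map (i.obj (a.obj (𝟙_ M)) ◁ i.map f) ≫ (lUn i a adj h Y).hom =
      (lUn i a adj h X).hom ≫ f := by
  refine eq_of_rel adj
    (s := (𝟙_ M ◁ i.map f) ≫ (λ_ (i.obj Y)).hom)
    (s' := (λ_ (i.obj X)).hom ≫ i.map f)
    (u₁ := (adj.unit.app (𝟙_ M) ▷ i.obj X) ≫ adj.unit.app _)
    (u₂ := 𝟙 (i.obj Y))
    ?_ ?_ ?_ (wComp adj (wR adj h (wUnit adj _) _) (wUnit adj _))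
  · refine Rel.congr (((rel_whiskerLeft adj (rel_self f) (a.obj (𝟙_ M))).shift
      (v₁ := adj.unit.app (𝟙_ M) ▷ i.obj X) (v₂ := adj.unit.app (𝟙_ M) ▷ i.obj Y)
      (whisker_exchange _ _).symm).comp (rel_lUn adj h Y) ?_) ?_ ?_
    · simp
    · simp
    · rfl
  · refine Rel.congr ((rel_lUn adj h X).comp (rel_self f) ?_) rfl (by simp)
    · rfl
  · exact leftUnitor_naturality (i.map f)

lemma rUn_naturality {X Y : M₀} (f : X ⟶ Y) :
    a.map (i.map f ▷ i.obj (a.obj (𝟙_ M))) ≫ (rUn i a adj h Y).hom =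
      (rUn i a adj h X).hom ≫ f := by
  refine eq_of_rel adj
    (s := (i.map f ▷ 𝟙_ M) ≫ (ρ_ (i.obj Y)).hom)
    (s' := (ρ_ (i.obj X)).hom ≫ i.map f)
    (u₁ := (i.obj X ◁ adj.unit.app (𝟙_ M)) ≫ adj.unit.app _)
    (u₂ := 𝟙 (i.obj Y))
    ?_ ?_ ?_ (wComp adj (wL adj h (wUnit adj _) _) (wUnit adj _))
  · refine Rel.congr (((rel_whiskerRight adj (rel_self f) (a.obj (𝟙_ M))).shift
      (v₁ := i.obj X ◁ adj.unit.app (𝟙_ M)) (v₂ := i.obj Y ◁ adj.unit.app (𝟙_ M))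
      (whisker_exchange _ _)).comp (rel_rUn adj h Y) ?_) ?_ ?_
    · simp
    · simp
    · rfl
  · refine Rel.congr ((rel_rUn adj h X).comp (rel_self f) ?_) rfl (by simp)
    · rfl
  · exact rightUnitor_naturality (i.map f)

lemma pentagon' (X Y Z W : M₀) :
    a.map (i.map (assoc i a adj h X Y Z).hom ▷ i.obj W) ≫
      (assoc i a adj h X (a.obj (i.obj Y ⊗ i.obj Z)) W).hom ≫
      a.map (i.obj X ◁ i.map (assoc i a adj h Y Z W).hom) =
    (assoc i a adj h (a.obj (i.obj X ⊗ i.obj Y)) Z W).hom ≫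
      (assoc i a adj h X Y (a.obj (i.obj Z ⊗ i.obj W))).hom := by
  refine eq_of_rel adj
    (s := ((α_ (i.obj X) (i.obj Y) (i.obj Z)).hom ▷ i.obj W) ≫
      (α_ (i.obj X) (i.obj Y ⊗ i.obj Z) (i.obj W)).hom ≫
      (i.obj X ◁ (α_ (i.obj Y) (i.obj Z) (i.obj W)).hom))
    (s' := (α_ (i.obj X ⊗ i.obj Y) (i.obj Z) (i.obj W)).hom ≫
      (α_ (i.obj X) (i.obj Y) (i.obj Z ⊗ i.obj W)).hom)
    (u₁ := ((adj.unit.app (i.obj X ⊗ i.obj Y) ▷ i.obj Z) ▷ i.obj W) ≫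
      (adj.unit.app (i.obj (a.obj (i.obj X ⊗ i.obj Y)) ⊗ i.obj Z) ▷ i.obj W) ≫ adj.unit.app _)
    (u₂ := (i.obj X ◁ (i.obj Y ◁ adj.unit.app (i.obj Z ⊗ i.obj W))) ≫
      (i.obj X ◁ adj.unit.app (i.obj Y ⊗ i.obj (a.obj (i.obj Z ⊗ i.obj W)))) ≫ adj.unit.app _)
    ?_ ?_ ?_
    (wComp adj (wR adj h (wR adj h (wUnit adj _) _) _)
      (wComp adj (wR adj h (wUnit adj _) _) (wUnit adj _)))
  · have e1 := rel_whiskerRight adj (rel_assoc adj h X Y Z) W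
    have e2 := (rel_assoc adj h X (a.obj (i.obj Y ⊗ i.obj Z)) W).shift
        (v₁ := (i.obj X ◁ adj.unit.app (i.obj Y ⊗ i.obj Z)) ▷ i.obj W)
        (v₂ := i.obj X ◁ (adj.unit.app (i.obj Y ⊗ i.obj Z) ▷ i.obj W))
        (associator_naturality_middle _ _ _)
    have e3 := rel_whiskerLeft adj (rel_assoc adj h Y Z W) X
    exact Rel.congr (e1.comp (e2.comp e3 (by simp)) (by simp)) (by simp) (by simp)
  · have e4 := (rel_assoc adj h (a.obj (i.obj X ⊗ i.obj Y)) Z W).shift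
      (v₁ := (adj.unit.app (i.obj X ⊗ i.obj Y) ▷ i.obj Z) ▷ i.obj W)
      (v₂ := adj.unit.app (i.obj X ⊗ i.obj Y) ▷ (i.obj Z ⊗ i.obj W))
      (associator_naturality_left _ _ _)
    have e5 := (rel_assoc adj h X Y (a.obj (i.obj Z ⊗ i.obj W))).shift
        (v₁ := (i.obj X ⊗ i.obj Y) ◁ adj.unit.app (i.obj Z ⊗ i.obj W))
        (v₂ := i.obj X ◁ (i.obj Y ◁ adj.unit.app (i.obj Z ⊗ i.obj W)))
        (associator_naturality_right _ _ _)
    exact Rel.congr (e4.comp e5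
      (by rw [← Category.assoc, ← Category.assoc, whisker_exchange]; simp)) (by simp) (by simp)
  · exact pentagon _ _ _ _

lemma triangle' (X Y : M₀) :
    (assoc i a adj h X (a.obj (𝟙_ M)) Y).hom ≫
      a.map (i.obj X ◁ i.map (lUn i a adj h Y).hom) =
    a.map (i.map (rUn i a adj h X).hom ▷ i.obj Y) := by
  refine eq_of_rel adj
    (s := (α_ (i.obj X) (𝟙_ M) (i.obj Y)).hom ≫ (i.obj X ◁ (λ_ (i.obj Y)).hom))
    (s' := (ρ_ (i.obj X)).hom ▷ i.obj Y)
    (u₁ := ((i.obj X ◁ adj.unit.app (𝟙_ M)) ▷ i.obj Y) ≫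
      (adj.unit.app (i.obj X ⊗ i.obj (a.obj (𝟙_ M))) ▷ i.obj Y) ≫ adj.unit.app _)
    (u₂ := adj.unit.app (i.obj X ⊗ i.obj Y))
    ?_ ?_ ?_
    (wComp adj (wR adj h (wL adj h (wUnit adj _) _) _)
      (wComp adj (wR adj h (wUnit adj _) _) (wUnit adj _)))
  · have e1 := (rel_assoc adj h X (a.obj (𝟙_ M)) Y).shift
      (v₁ := (i.obj X ◁ adj.unit.app (𝟙_ M)) ▷ i.obj Y)
      (v₂ := i.obj X ◁ (adj.unit.app (𝟙_ M) ▷ i.obj Y))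
      (associator_naturality_middle _ _ _)
    have e2 := rel_whiskerLeft adj (rel_lUn adj h Y) X
    exact Rel.congr (e1.comp e2 (by simp)) (by simp) (by simp)
  · refine Rel.congr (rel_whiskerRight adj (rel_rUn adj h X) Y) ?_ ?_
    · simp
    · simp
  · exact triangle _ _

end Coherence

section Str

variable (i a)
variable (h : ∀ {X Y : M} (f : X ⟶ Y), IsIso (a.map f) →
      ∀ m : M, IsIso (a.map (f ▷ m)) ∧ IsIso (a.map (m ◁ f)))

/-- The transferred monoidal structure on the reflective subcategory. -/
noncomputable def mstr : MonoidalCategory M₀ where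
  tensorObj X Y := a.obj (i.obj X ⊗ i.obj Y)
  whiskerLeft X _ _ f := a.map (i.obj X ◁ i.map f)
  whiskerRight f Y := a.map (i.map f ▷ i.obj Y)
  tensorHom f g := a.map (i.map f ⊗ₘ i.map g)
  tensorUnit := a.obj (𝟙_ M)
  associator := assoc i a adj h
  leftUnitor := lUn i a adj h
  rightUnitor := rUn i a adj h
  tensorHom_def f g := tensorHom_def₀ f g
  id_tensorHom_id X Y := tensor_id₀ X Y
  tensorHom_comp_tensorHom f₁ f₂ g₁ g₂ := (tensor_comp₀ f₁ f₂ g₁ g₂).symm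
  whiskerLeft_id X Y := whiskerLeft_id₀ X Y
  id_whiskerRight X Y := id_whiskerRight₀ X Y
  associator_naturality f₁ f₂ f₃ := assoc_naturality adj h f₁ f₂ f₃
  leftUnitor_naturality f := lUn_naturality adj h f
  rightUnitor_naturality f := rUn_naturality adj h f
  pentagon X Y Z W := pentagon' adj h X Y Z W
  triangle X Y := triangle' adj h X Y

end Str


section MuCoherence

variable (h : ∀ {X Y : M} (f : X ⟶ Y), IsIso (a.map f) →
      ∀ m : M, IsIso (a.map (f ▷ m)) ∧ IsIso (a.map (m ◁ f)))

lemma mu_natural_left {X Y : M} (f : X ⟶ Y) (X' : M) :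
    a.map (i.map (a.map f) ▷ i.obj (a.obj X')) ≫ (mu i a adj h Y X').hom =
      (mu i a adj h X X').hom ≫ a.map (f ▷ X') := by
  refine eq_of_rel adj
    (s := (f ▷ X') ≫ 𝟙 (Y ⊗ X'))
    (s' := 𝟙 (X ⊗ X') ≫ (f ▷ X'))
    (u₁ := (adj.unit.app X ⊗ₘ adj.unit.app X') ≫ adj.unit.app _)
    (u₂ := adj.unit.app (Y ⊗ X'))
    ?_ ?_ (by simp)
    (wComp adj (wTensor adj h (wUnit adj _) (wUnit adj _)) (wUnit adj _))
  · have e1 := (rel_whiskerRight adj (rel_map' adj f) (a.obj X')).shift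
      (v₁ := X ◁ adj.unit.app X') (v₂ := Y ◁ adj.unit.app X') (whisker_exchange _ _)
    exact Rel.congr (e1.comp (rel_mu adj h Y X') (by simp [MonoidalCategory.tensorHom_def']))
      (by simp [MonoidalCategory.tensorHom_def']) rfl
  · exact Rel.congr ((rel_mu adj h X X').comp (rel_map' adj (f ▷ X')) rfl) rfl rfl

lemma mu_natural_right (X' : M) {X Y : M} (f : X ⟶ Y) :
    a.map (i.obj (a.obj X') ◁ i.map (a.map f)) ≫ (mu i a adj h X' Y).hom =
      (mu i a adj h X' X).hom ≫ a.map (X' ◁ f) := by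
  refine eq_of_rel adj
    (s := (X' ◁ f) ≫ 𝟙 (X' ⊗ Y))
    (s' := 𝟙 (X' ⊗ X) ≫ (X' ◁ f))
    (u₁ := (adj.unit.app X' ⊗ₘ adj.unit.app X) ≫ adj.unit.app _)
    (u₂ := adj.unit.app (X' ⊗ Y))
    ?_ ?_ (by simp)
    (wComp adj (wTensor adj h (wUnit adj _) (wUnit adj _)) (wUnit adj _))
  · have e1 := (rel_whiskerLeft adj (rel_map' adj f) (a.obj X')).shift
      (v₁ := adj.unit.app X' ▷ X) (v₂ := adj.unit.app X' ▷ Y) (whisker_exchange _ _).symm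
    exact Rel.congr (e1.comp (rel_mu adj h X' Y) (by simp [MonoidalCategory.tensorHom_def]))
      (by simp [MonoidalCategory.tensorHom_def]) rfl
  · exact Rel.congr ((rel_mu adj h X' X).comp (rel_map' adj (X' ◁ f)) rfl) rfl rfl

lemma mu_associativity (X Y Z : M) :
    a.map (i.map (mu i a adj h X Y).hom ▷ i.obj (a.obj Z)) ≫
      (mu i a adj h (X ⊗ Y) Z).hom ≫ a.map (α_ X Y Z).hom =
    (assoc i a adj h (a.obj X) (a.obj Y) (a.obj Z)).hom ≫
      a.map (i.obj (a.obj X) ◁ i.map (mu i a adj h Y Z).hom) ≫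
      (mu i a adj h X (Y ⊗ Z)).hom := by
  refine eq_of_rel adj
    (s := (𝟙 (X ⊗ Y) ▷ Z) ≫ 𝟙 ((X ⊗ Y) ⊗ Z) ≫ (α_ X Y Z).hom)
    (s' := (α_ X Y Z).hom ≫ 𝟙 (X ⊗ (Y ⊗ Z)) ≫ 𝟙 (X ⊗ (Y ⊗ Z)))
    (u₁ := ((adj.unit.app X ⊗ₘ adj.unit.app Y) ⊗ₘ adj.unit.app Z) ≫
      (adj.unit.app (i.obj (a.obj X) ⊗ i.obj (a.obj Y)) ▷ i.obj (a.obj Z)) ≫ adj.unit.app _)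
    (u₂ := adj.unit.app (X ⊗ (Y ⊗ Z)))
    ?_ ?_ (by simp)
    (wComp adj (wTensor adj h (wTensor adj h (wUnit adj _) (wUnit adj _)) (wUnit adj _))
      (wComp adj (wR adj h (wUnit adj _) _) (wUnit adj _)))
  · have e1 := (rel_whiskerRight adj (rel_mu adj h X Y) (a.obj Z)).shift
      (v₁ := (X ⊗ Y) ◁ adj.unit.app Z) (v₂ := (X ⊗ Y) ◁ adj.unit.app Z)
      (s' := 𝟙 (X ⊗ Y) ▷ Z) (by simp)
    have e2 := rel_mu adj h (X ⊗ Y) Z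
    have e3 := rel_map' adj (α_ X Y Z).hom
    refine Rel.congr (e1.comp (e2.comp e3 rfl) ?_) ?_ rfl
    · rw [MonoidalCategory.tensorHom_def']
      simp only [Category.assoc]
      rfl
    · rw [MonoidalCategory.tensorHom_def' (adj.unit.app X ⊗ₘ adj.unit.app Y) (adj.unit.app Z)]
      simp only [comp_whiskerRight, Category.assoc]
      rfl
  · have e4 := (rel_assoc adj h (a.obj X) (a.obj Y) (a.obj Z)).shift
      (v₁ := (adj.unit.app X ⊗ₘ adj.unit.app Y) ⊗ₘ adj.unit.app Z)
      (v₂ := adj.unit.app X ⊗ₘ (adj.unit.app Y ⊗ₘ adj.unit.app Z))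
      (associator_naturality _ _ _)
    have e5 := (rel_whiskerLeft adj (rel_mu adj h Y Z) (a.obj X)).shift
      (v₁ := adj.unit.app X ▷ (Y ⊗ Z)) (v₂ := adj.unit.app X ▷ (Y ⊗ Z))
      (s' := 𝟙 (X ⊗ (Y ⊗ Z))) (by simp)
    have e6 := rel_mu adj h X (Y ⊗ Z)
    refine Rel.congr (e4.comp (e5.comp e6 ?_) ?_) rfl rfl
    · rw [MonoidalCategory.tensorHom_def]
      simp only [Category.assoc]
      rfl
    · rw [MonoidalCategory.tensorHom_def (adj.unit.app X) (adj.unit.app Y ⊗ₘ adj.unit.app Z)]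
      simp only [MonoidalCategory.whiskerLeft_comp, Category.assoc]
      rfl

lemma mu_left_unitality (X : M) :
    (lUn i a adj h (a.obj X)).hom =
      a.map (i.map (𝟙 (a.obj (𝟙_ M))) ▷ i.obj (a.obj X)) ≫
        (mu i a adj h (𝟙_ M) X).hom ≫ a.map (λ_ X).hom := by
  refine eq_of_rel adj
    (s := (λ_ X).hom)
    (s' := 𝟙 (𝟙_ M ⊗ X) ≫ 𝟙 (𝟙_ M ⊗ X) ≫ (λ_ X).hom)
    (u₁ := (adj.unit.app (𝟙_ M) ⊗ₘ adj.unit.app X) ≫ adj.unit.app _)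
    (u₂ := adj.unit.app X)
    ?_ ?_ (by simp)
    (wComp adj (wTensor adj h (wUnit adj _) (wUnit adj _)) (wUnit adj _))
  · have e1 := (rel_lUn adj h (a.obj X)).shift
      (v₁ := 𝟙_ M ◁ adj.unit.app X) (v₂ := adj.unit.app X)
      (leftUnitor_naturality _)
    exact Rel.congr e1 (by simp [MonoidalCategory.tensorHom_def']) (by simp)
  · have e2 := (rel_whiskerRight adj (rel_self (𝟙 (a.obj (𝟙_ M)))) (a.obj X)).shift
      (v₁ := adj.unit.app (𝟙_ M) ⊗ₘ adj.unit.app X)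
      (v₂ := adj.unit.app (𝟙_ M) ⊗ₘ adj.unit.app X)
      (s' := 𝟙 (𝟙_ M ⊗ X)) (by simp)
    have e3 := rel_mu adj h (𝟙_ M) X
    have e4 := rel_map' adj (λ_ X).hom
    exact Rel.congr (e2.comp (e3.comp e4 rfl) (by simp)) (by simp) rfl

lemma mu_right_unitality (X : M) :
    (rUn i a adj h (a.obj X)).hom =
      a.map (i.obj (a.obj X) ◁ i.map (𝟙 (a.obj (𝟙_ M)))) ≫
        (mu i a adj h X (𝟙_ M)).hom ≫ a.map (ρ_ X).hom := by
  refine eq_of_rel adj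
    (s := (ρ_ X).hom)
    (s' := 𝟙 (X ⊗ 𝟙_ M) ≫ 𝟙 (X ⊗ 𝟙_ M) ≫ (ρ_ X).hom)
    (u₁ := (adj.unit.app X ⊗ₘ adj.unit.app (𝟙_ M)) ≫ adj.unit.app _)
    (u₂ := adj.unit.app X)
    ?_ ?_ (by simp)
    (wComp adj (wTensor adj h (wUnit adj _) (wUnit adj _)) (wUnit adj _))
  · have e1 := (rel_rUn adj h (a.obj X)).shift
      (v₁ := adj.unit.app X ▷ 𝟙_ M) (v₂ := adj.unit.app X)
      (rightUnitor_naturality _)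
    exact Rel.congr e1 (by simp [MonoidalCategory.tensorHom_def]) (by simp)
  · have e2 := (rel_whiskerLeft adj (rel_self (𝟙 (a.obj (𝟙_ M)))) (a.obj X)).shift
      (v₁ := adj.unit.app X ⊗ₘ adj.unit.app (𝟙_ M))
      (v₂ := adj.unit.app X ⊗ₘ adj.unit.app (𝟙_ M))
      (s' := 𝟙 (X ⊗ 𝟙_ M)) (by simp)
    have e3 := rel_mu adj h X (𝟙_ M)
    have e4 := rel_map' adj (ρ_ X).hom
    exact Rel.congr (e2.comp (e3.comp e4 rfl) (by simp)) (by simp) rfl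

end MuCoherence

section Core

variable (i a)
variable (h : ∀ {X Y : M} (f : X ⟶ Y), IsIso (a.map f) →
      ∀ m : M, IsIso (a.map (f ▷ m)) ∧ IsIso (a.map (m ◁ f)))

/-- The reflector is a strong monoidal functor for the transferred structure. -/
noncomputable def core : @Functor.CoreMonoidal M _ _ M₀ _ (mstr i a adj h) a :=
  letI := mstr i a adj h
  { εIso := Iso.refl _
    μIso := mu i a adj h
    μIso_hom_natural_left := fun f X' => mu_natural_left adj h f X'
    μIso_hom_natural_right := fun X' f => mu_natural_right adj h X' f
    associativity := fun X Y Z => mu_associativity adj h X Y Z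
    left_unitality := fun X => by
      exact mu_left_unitality adj h X
    right_unitality := fun X => by
      exact mu_right_unitality adj h X }

end Core

end DayRefl

theorem statement11 {M : Type u} [Category.{v} M] [MonoidalCategory M]
    {M₀ : Type u'} [Category.{v'} M₀] (i : M₀ ⥤ M) [i.Full] [i.Faithful]
    (a : M ⥤ M₀) (adj : a ⊣ i)
    (h : ∀ {X Y : M} (f : X ⟶ Y), IsIso (a.map f) →
      ∀ m : M, IsIso (a.map (f ▷ m)) ∧ IsIso (a.map (m ◁ f))) :
    ∃ S : MonoidalCategory M₀,
      (∀ X Y : M₀, S.tensorObj X Y = a.obj (i.obj X ⊗ i.obj Y)) ∧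
      S.tensorUnit = a.obj (𝟙_ M) ∧
      Nonempty (@Functor.Monoidal M _ _ M₀ _ S a) := by
  refine ⟨DayRefl.mstr i a adj h, fun X Y => rfl, rfl, ⟨?_⟩⟩
  letI : MonoidalCategory M₀ := DayRefl.mstr i a adj h
  exact (DayRefl.core i a adj h).toMonoidal
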